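/- Let A be a self-adjoint operator, L a finite-dimensional subspace of Dom(A), and μ a complex number such that P_L(μ)u = 0 for some nonzero u ∈ L (i.e., μ is in the second-order spectrum of A relative to L). Then the distance from Re(μ) to the spectrum of A is at most |Im(μ)|: inf{|Re μ - λ| : λ ∈ Spec(A)} ≤ |Im μ|. -/

import Mathlib

open scoped ComplexInnerProductSpace

lemma aux_lower_bound {H : Type*} [NormedAddCommGroup H] [InnerProductSpace ℂ H] [CompleteSpace H]
    (A : H →L[ℂ] H) (hA : IsSelfAdjoint A) (a : ℝ) (w : H) :
    Metric.infDist ((a : ℂ)) (spectrum ℂ A) * ‖w‖ ≤ ‖A w - (a : ℂ) • w‖ := by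
  set d := Metric.infDist ((a : ℂ)) (spectrum ℂ A) with hd
  have hd0 : 0 ≤ d := Metric.infDist_nonneg
  set T : H →L[ℂ] H := A - algebraMap ℝ (H →L[ℂ] H) a with hTdef
  have hTsa : IsSelfAdjoint T := hA.sub (IsSelfAdjoint.algebraMap _ (star_trivial a))
  have hspec : ∀ x ∈ spectrum ℝ A, (fun _ : ℝ => d ^ 2) x ≤ (fun x : ℝ => (x - a) ^ 2) x := by
    intro x hx
    have hx' : (x : ℂ) ∈ spectrum ℂ A := by
      simpa using (spectrum.algebraMap_mem_iff (R := ℝ) ℂ).mpr hx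
    have hle : d ≤ dist ((a : ℂ)) ((x : ℂ)) := Metric.infDist_le_dist_of_mem hx'
    have hdist : dist ((a : ℂ)) ((x : ℂ)) = |a - x| := by
      rw [Complex.dist_eq, ← Complex.ofReal_sub, Complex.norm_real, Real.norm_eq_abs]
    rw [hdist] at hle
    calc d ^ 2 ≤ |a - x| ^ 2 := pow_le_pow_left₀ hd0 hle 2
      _ = (x - a) ^ 2 := by rw [sq_abs]; ring
  have hS : cfc (fun x : ℝ => (x - a) ^ 2) A = T ^ 2 := by
    rw [cfc_pow (fun x : ℝ => x - a) 2 A, cfc_sub (fun x : ℝ => x) (fun _ : ℝ => a) A,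
      cfc_id' ℝ A, cfc_const a A]
  have hle2 : algebraMap ℝ (H →L[ℂ] H) (d ^ 2) ≤ T ^ 2 := by
    rw [← hS, ← cfc_const (d ^ 2) A]
    exact cfc_mono hspec
  have hpos : (T ^ 2 - algebraMap ℝ (H →L[ℂ] H) (d ^ 2)).IsPositive :=
    (ContinuousLinearMap.le_def _ _).mp hle2
  have hinner := hpos.re_inner_nonneg_right w
  have hTw : T w = A w - (a : ℂ) • w := by
    simp [hTdef, Algebra.algebraMap_eq_smul_one, ContinuousLinearMap.sub_apply]
  have hcalc : RCLike.re (⟪w, (T ^ 2 - algebraMap ℝ (H →L[ℂ] H) (d ^ 2)) w⟫)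
      = ‖T w‖ ^ 2 - d ^ 2 * ‖w‖ ^ 2 := by
    have h1 : (T ^ 2 - algebraMap ℝ (H →L[ℂ] H) (d ^ 2)) w = T (T w) - (d ^ 2 : ℝ) • w := by
      simp [Algebra.algebraMap_eq_smul_one, ContinuousLinearMap.sub_apply, pow_two,
        ContinuousLinearMap.mul_apply]
    have h2 : ⟪w, T (T w)⟫ = ⟪T w, T w⟫ :=
      ((ContinuousLinearMap.isSelfAdjoint_iff_isSymmetric.mp hTsa) w (T w)).symm
    rw [h1, inner_sub_right, h2, RCLike.real_smul_eq_coe_smul (K := ℂ),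
      inner_smul_real_right, map_sub, RCLike.smul_re,
      inner_self_eq_norm_sq (𝕜 := ℂ), inner_self_eq_norm_sq (𝕜 := ℂ)]
  rw [hcalc] at hinner
  rw [← hTw]
  have hsq : (d * ‖w‖) ^ 2 ≤ ‖T w‖ ^ 2 := by nlinarith [hinner]
  have := Real.sqrt_le_sqrt hsq
  rwa [Real.sqrt_sq (by positivity), Real.sqrt_sq (norm_nonneg _)] at this


/-- If `μ` belongs to the second-order spectrum of the self-adjoint operator `A` relative to a
finite-dimensional subspace (spanned by a linearly independent family `e`), then the distance
from `Re μ` to the spectrum of `A` is at most `|Im μ|`. -/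
theorem stmt3 {H : Type*} [NormedAddCommGroup H] [InnerProductSpace ℂ H] [CompleteSpace H]
    (A : H →L[ℂ] H) (hA : IsSelfAdjoint A)
    (n : ℕ) (e : Fin n → H) (he : LinearIndependent ℂ e)
    (μ : ℂ) (u : Fin n → ℂ) (hu : u ≠ 0)
    (hμ : (Matrix.of fun j k : Fin n =>
        (inner ℂ (A (e j)) (A (e k)) : ℂ) - 2 * μ * (inner ℂ (A (e j)) (e k) : ℂ)
          + μ ^ 2 * (inner ℂ (e j) (e k) : ℂ)).mulVec u = 0) :
    Metric.infDist ((μ.re : ℂ)) (spectrum ℂ A) ≤ |μ.im| := by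
    classical
  set w : H := ∑ k, u k • e k with hw
  have hw0 : w ≠ 0 := by
    intro h
    exact hu (funext fun i => Fintype.linearIndependent_iff.mp he u (by simpa [hw] using h) i)
  have hN : 0 < ‖w‖ := norm_pos_iff.mpr hw0
  have hrow : ∀ j, ∑ k, (((inner ℂ (A (e j)) (A (e k)) : ℂ) - 2 * μ * (inner ℂ (A (e j)) (e k) : ℂ)
      + μ ^ 2 * (inner ℂ (e j) (e k) : ℂ)) * u k) = 0 := by
    intro j
    have := congrFun hμ j
    simpa [Matrix.mulVec, dotProduct] using this
  have hAw : A w = ∑ k, u k • A (e k) := by simp [hw, map_sum, map_smul]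
  have h1 : (inner ℂ (A w) (A w) : ℂ)
      = ∑ j, ∑ k, (starRingEnd ℂ) (u j) * u k * (inner ℂ (A (e j)) (A (e k)) : ℂ) := by
    rw [hAw, sum_inner]
    refine Finset.sum_congr rfl fun j _ => ?_
    rw [inner_smul_left, inner_sum, Finset.mul_sum]
    refine Finset.sum_congr rfl fun k _ => ?_
    rw [inner_smul_right]; ring
  have h2 : (inner ℂ (A w) w : ℂ)
      = ∑ j, ∑ k, (starRingEnd ℂ) (u j) * u k * (inner ℂ (A (e j)) (e k) : ℂ) := by
    rw [hAw, hw, sum_inner]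
    refine Finset.sum_congr rfl fun j _ => ?_
    rw [inner_smul_left, inner_sum, Finset.mul_sum]
    refine Finset.sum_congr rfl fun k _ => ?_
    rw [inner_smul_right]; ring
  have h3 : (inner ℂ w w : ℂ)
      = ∑ j, ∑ k, (starRingEnd ℂ) (u j) * u k * (inner ℂ (e j) (e k) : ℂ) := by
    rw [hw, sum_inner]
    refine Finset.sum_congr rfl fun j _ => ?_
    rw [inner_smul_left, inner_sum, Finset.mul_sum]
    refine Finset.sum_congr rfl fun k _ => ?_
    rw [inner_smul_right]; ring
  have key : (inner ℂ (A w) (A w) : ℂ) - 2 * μ * (inner ℂ (A w) w : ℂ)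
      + μ ^ 2 * (inner ℂ w w : ℂ) = 0 := by
    have hz : (∑ j, (starRingEnd ℂ) (u j)
        * ∑ k, (((inner ℂ (A (e j)) (A (e k)) : ℂ) - 2 * μ * (inner ℂ (A (e j)) (e k) : ℂ)
          + μ ^ 2 * (inner ℂ (e j) (e k) : ℂ)) * u k)) = 0 := by
      simp [hrow]
    rw [h1, h2, h3, ← hz]
    simp only [Finset.mul_sum]
    rw [← Finset.sum_sub_distrib, ← Finset.sum_add_distrib]
    refine Finset.sum_congr rfl fun j _ => ?_
    rw [← Finset.sum_sub_distrib, ← Finset.sum_add_distrib]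
    refine Finset.sum_congr rfl fun k _ => ?_
    ring
  -- reality of ⟪A w, w⟫
  have hAsymm := ContinuousLinearMap.isSelfAdjoint_iff_isSymmetric.mp hA
  have hAwre : (inner ℂ (A w) w : ℂ) = ((inner ℂ (A w) w : ℂ).re : ℂ) := by
    have hc : (starRingEnd ℂ) (inner ℂ (A w) w : ℂ) = (inner ℂ (A w) w : ℂ) := by
      rw [inner_conj_symm]
      exact (hAsymm w w).symm
    exact (Complex.conj_eq_iff_re.mp hc).symm
  set a : ℝ := μ.re
  set b : ℝ := μ.im
  set t : ℝ := (inner ℂ (A w) w : ℂ).re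
  have e1 : (inner ℂ (A w) (A w) : ℂ) = ((‖A w‖ : ℂ)) ^ 2 := inner_self_eq_norm_sq_to_K (A w)
  have e3 : (inner ℂ w w : ℂ) = ((‖w‖ : ℂ)) ^ 2 := inner_self_eq_norm_sq_to_K w
  have hR : ‖A w‖ ^ 2 - 2 * a * t + (a ^ 2 - b ^ 2) * ‖w‖ ^ 2 = 0 := by
    rw [e1, hAwre, e3] at key
    have := congrArg Complex.re key
    simp only [Complex.add_re, Complex.sub_re, Complex.add_im, Complex.sub_im,
      Complex.mul_re, Complex.mul_im, Complex.ofReal_re, Complex.ofReal_im,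
      Complex.zero_re, Complex.re_ofNat, Complex.im_ofNat, pow_two] at this
    simp only [pow_two]
    linear_combination this
  have hnorm : ‖A w - (a : ℂ) • w‖ ^ 2 = b ^ 2 * ‖w‖ ^ 2 := by
    rw [norm_sub_sq (𝕜 := ℂ)]
    have : RCLike.re (inner ℂ (A w) ((a : ℂ) • w) : ℂ) = a * t := by
      rw [inner_smul_right, hAwre, ← Complex.ofReal_mul]
      simp
    rw [this, norm_smul]
    simp only [Complex.norm_real, Real.norm_eq_abs]
    nlinarith [hR, sq_abs a]
  have hle := aux_lower_bound A hA a w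
  have hnorm' : ‖A w - (a : ℂ) • w‖ = |b| * ‖w‖ := by
    have h4 : ‖A w - (a : ℂ) • w‖ ^ 2 = (|b| * ‖w‖) ^ 2 := by
      rw [hnorm, mul_pow, sq_abs]
    have := congrArg Real.sqrt h4
    rwa [Real.sqrt_sq (norm_nonneg _), Real.sqrt_sq (by positivity)] at this
  rw [hnorm'] at hle
  exact le_of_mul_le_mul_right hle hN
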